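/- Let N ≥ 2 be an integer and p an odd prime not dividing N. Then in ZMod p one has N · q_p(N) ≡ Σ_{j=1}^{N−1} j · Σ_{jp/N < m < (j+1)p/N} 1/m, where q_p(N) = (N^{p−1} − 1)/p ∈ ℤ and the inner sums of reciprocals of integers m in the open interval (jp/N, (j+1)p/N) are rational numbers with denominator coprime to p viewed in ZMod p. -/

import Mathlib

open Finset

open scoped Classical

lemma pndvd (N p m : ℕ) (hp : p.Prime) (hpN : ¬ p ∣ N) (hm : m ∈ Finset.Ico 1 p) :
    ¬ p ∣ N * m := by
  rw [Finset.mem_Ico] at hm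
  rintro h
  rcases (Nat.Prime.dvd_mul hp).mp h with h | h
  · exact hpN h
  · have := Nat.le_of_dvd (by omega) h; omega

lemma prod_expand {R : Type*} [CommRing R] (ε : R) (hε : ε * ε = 0)
    (s : Finset ℕ) (r j : ℕ → R) :
    ∏ i ∈ s, (r i + ε * j i) =
      ∏ i ∈ s, r i + ε * ∑ i ∈ s, j i * ∏ k ∈ s.erase i, r k := by
  induction s using Finset.induction_on with
  | empty => simp
  | @insert a s ha ih =>
    rw [Finset.prod_insert ha, Finset.prod_insert ha, ih, Finset.sum_insert ha,
      Finset.erase_insert ha]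
    have h2 : ∑ i ∈ s, j i * ∏ k ∈ (insert a s).erase i, r k
        = ∑ i ∈ s, r a * (j i * ∏ k ∈ s.erase i, r k) := by
      refine Finset.sum_congr rfl fun i hi => ?_
      rw [Finset.erase_insert_of_ne (by rintro rfl; exact ha hi),
        Finset.prod_insert (fun h => ha (Finset.mem_of_mem_erase h))]
      ring
    rw [h2, ← Finset.mul_sum]
    linear_combination (j a * ∑ i ∈ s, j i * ∏ k ∈ s.erase i, r k) * hε

lemma cancel_p (p : ℕ) (hp : 1 < p) (x y : ZMod (p^2))
    (h : (p : ZMod (p^2)) * x = (p : ZMod (p^2)) * y) :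
    (ZMod.castHom (dvd_pow_self p two_ne_zero) (ZMod p)) x
      = (ZMod.castHom (dvd_pow_self p two_ne_zero) (ZMod p)) y := by
  have hp0 : 0 < p := by omega
  haveI : NeZero (p^2) := ⟨by positivity⟩
  haveI : NeZero p := ⟨by omega⟩
  have hz : (p : ZMod (p^2)) * (x - y) = 0 := by linear_combination h
  set z := x - y with hzdef
  have hval : ((p : ZMod (p^2)).val * z.val) % p^2 = 0 := by
    rw [← ZMod.val_mul, hz, ZMod.val_zero]
  have hpv : (p : ZMod (p^2)).val = p := by
    rw [ZMod.val_natCast, Nat.mod_eq_of_lt]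
    nlinarith
  rw [hpv] at hval
  have hdvd : p ∣ z.val := by
    obtain ⟨c, hc⟩ := Nat.dvd_of_mod_eq_zero hval
    refine ⟨c, Nat.eq_of_mul_eq_mul_left hp0 ?_⟩
    rw [hc]; ring
  have hz0 : (ZMod.castHom (dvd_pow_self p two_ne_zero) (ZMod p)) z = 0 := by
    rw [ZMod.castHom_apply, ← ZMod.natCast_val, ZMod.natCast_eq_zero_iff]
    exact hdvd
  have h3 := map_sub (ZMod.castHom (dvd_pow_self p two_ne_zero) (ZMod p)) x y
  rw [← hzdef, hz0] at h3
  exact sub_eq_zero.mp h3.symm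

lemma prod_mod_bij {M : Type*} [CommMonoid M] (N p : ℕ) (hp : p.Prime)
    (hpN : ¬ p ∣ N) (f : ℕ → M) :
    ∏ m ∈ Finset.Ico 1 p, f (N * m % p) = ∏ m ∈ Finset.Ico 1 p, f m := by
  haveI : Fact p.Prime := ⟨hp⟩
  have hp0 : 0 < p := hp.pos
  have hN0 : (N : ZMod p) ≠ 0 := by
    rwa [Ne, ZMod.natCast_eq_zero_iff]
  have hmem : ∀ m ∈ Finset.Ico 1 p, N * m % p ∈ Finset.Ico 1 p := by
    intro m hm
    have hnd := pndvd N p m hp hpN hm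
    have h1 : N * m % p ≠ 0 := fun h => hnd (Nat.dvd_of_mod_eq_zero h)
    simp only [Finset.mem_Ico]
    exact ⟨by omega, Nat.mod_lt _ hp0⟩
  refine Finset.prod_nbij (fun m => N * m % p) hmem ?_ ?_ (fun a _ => rfl)
  · intro a ha b hb hab
    simp only [Finset.coe_Ico, Set.mem_Ico] at ha hb
    have h1 : ((N * a : ℕ) : ZMod p) = ((N * b : ℕ) : ZMod p) := by
      rw [← ZMod.natCast_mod (N * a) p, ← ZMod.natCast_mod (N * b) p]
      exact congrArg _ hab
    push_cast at h1
    have hmab : (a : ZMod p) = (b : ZMod p) := mul_left_cancel₀ hN0 h1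
    have := congrArg ZMod.val hmab
    rwa [ZMod.val_natCast, ZMod.val_natCast, Nat.mod_eq_of_lt ha.2,
      Nat.mod_eq_of_lt hb.2] at this
  · intro b hb
    simp only [Finset.coe_Ico, Set.mem_Ico] at hb
    have hbne : ((N : ZMod p)⁻¹ * (b : ZMod p)) ≠ 0 := by
      apply mul_ne_zero (inv_ne_zero hN0)
      rw [Ne, ZMod.natCast_eq_zero_iff]
      intro h; have := Nat.le_of_dvd (by omega) h; omega
    have hvne : ((N : ZMod p)⁻¹ * (b : ZMod p)).val ≠ 0 := by
      rwa [Ne, ZMod.val_eq_zero]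
    refine ⟨((N : ZMod p)⁻¹ * b).val, ?_, ?_⟩
    · simp only [Finset.coe_Ico, Set.mem_Ico]
      exact ⟨by omega, ZMod.val_lt _⟩
    · have h3 : ((N * ((N : ZMod p)⁻¹ * b).val : ℕ) : ZMod p) = (b : ZMod p) := by
        push_cast [ZMod.natCast_val, ZMod.cast_id]
        rw [← mul_assoc, mul_inv_cancel₀ hN0, one_mul]
      have h2 := congrArg ZMod.val h3
      rwa [ZMod.val_natCast, ZMod.val_natCast, Nat.mod_eq_of_lt hb.2] at h2

lemma lerch_key (N p : ℕ) (hN : 2 ≤ N) (hp : p.Prime) (hpN : ¬ p ∣ N) :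
    (N : ZMod p) * (((N ^ (p - 1) - 1) / p : ℕ) : ZMod p)
    = ∑ m ∈ Finset.Ico 1 p, ((N * m / p : ℕ) : ZMod p) * ((m : ZMod p))⁻¹ := by
  haveI : Fact p.Prime := ⟨hp⟩
  have hp1 : 1 < p := hp.one_lt
  haveI : NeZero (p^2) := ⟨by positivity⟩
  have hN0 : (N : ZMod p) ≠ 0 := by rwa [Ne, ZMod.natCast_eq_zero_iff]
  set q : ℕ := (N ^ (p - 1) - 1) / p with hqdef
  -- Fermat's little theorem: N^(p-1) = 1 + p * q
  have hfer : p ∣ N ^ (p - 1) - 1 := by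
    have h1 : (N : ZMod p) ^ (p - 1) = 1 := ZMod.pow_card_sub_one_eq_one hN0
    have h2 : 1 ≤ N ^ (p - 1) := Nat.one_le_pow _ _ (by omega)
    rw [← ZMod.natCast_eq_zero_iff]
    push_cast [h2]
    rw [h1]; ring
  have hq : N ^ (p - 1) = 1 + p * q := by
    obtain ⟨c, hc⟩ := hfer
    have h2 : 1 ≤ N ^ (p - 1) := Nat.one_le_pow _ _ (by omega)
    have hqc : q = c := by
      rw [hqdef, hc]
      exact Nat.mul_div_cancel_left c (by omega)
    rw [hqc]
    omega
  -- work in ZMod (p^2)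
  have hε : (p : ZMod (p^2)) * (p : ZMod (p^2)) = 0 := by
    have h0 : ((p ^ 2 : ℕ) : ZMod (p^2)) = 0 := ZMod.natCast_self _
    push_cast at h0
    linear_combination h0
  have key2 : ∏ m ∈ Finset.Ico 1 p, ((N * m : ℕ) : ZMod (p^2))
      = ∏ m ∈ Finset.Ico 1 p, ((N * m % p : ℕ) : ZMod (p^2))
        + (p : ZMod (p^2)) * ∑ m ∈ Finset.Ico 1 p, ((N * m / p : ℕ) : ZMod (p^2))
            * ∏ k ∈ (Finset.Ico 1 p).erase m, ((N * k % p : ℕ) : ZMod (p^2)) := by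
    rw [← prod_expand (p : ZMod (p^2)) hε (Finset.Ico 1 p)
      (fun i => ((N * i % p : ℕ) : ZMod (p^2))) (fun i => ((N * i / p : ℕ) : ZMod (p^2)))]
    refine Finset.prod_congr rfl fun i _ => ?_
    have h := Nat.div_add_mod (N * i) p
    conv_lhs => rw [← h]
    push_cast
    ring
  have bijP2 : ∏ m ∈ Finset.Ico 1 p, ((N * m % p : ℕ) : ZMod (p^2))
      = ∏ m ∈ Finset.Ico 1 p, ((m : ℕ) : ZMod (p^2)) :=
    prod_mod_bij N p hp hpN (fun a => ((a : ℕ) : ZMod (p^2)))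
  have prodN : ∏ m ∈ Finset.Ico 1 p, ((N * m : ℕ) : ZMod (p^2))
      = ((N : ZMod (p^2))) ^ (p - 1) * ∏ m ∈ Finset.Ico 1 p, ((m : ℕ) : ZMod (p^2)) := by
    rw [Finset.prod_congr rfl (fun m _ => Nat.cast_mul N m), Finset.prod_mul_distrib,
      Finset.prod_const, Nat.card_Ico]
  have NpowP2 : ((N : ZMod (p^2))) ^ (p - 1) = 1 + (p : ZMod (p^2)) * (q : ZMod (p^2)) := by
    exact_mod_cast congrArg (fun n : ℕ => (n : ZMod (p^2))) hq
  set F2 : ZMod (p^2) := ∏ m ∈ Finset.Ico 1 p, ((m : ℕ) : ZMod (p^2)) with hF2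
  set T2 : ZMod (p^2) := ∑ m ∈ Finset.Ico 1 p, ((N * m / p : ℕ) : ZMod (p^2))
      * ∏ k ∈ (Finset.Ico 1 p).erase m, ((N * k % p : ℕ) : ZMod (p^2)) with hT2
  have hmul : (p : ZMod (p^2)) * ((q : ZMod (p^2)) * F2) = (p : ZMod (p^2)) * T2 := by
    rw [prodN, bijP2, NpowP2] at key2
    linear_combination key2
  have hcast := cancel_p p hp1 _ _ hmul
  set φ := ZMod.castHom (dvd_pow_self p two_ne_zero) (ZMod p) with hφ
  simp only [hF2, hT2, map_mul, map_sum, map_prod, map_natCast] at hcast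
  -- hcast : (q : ZMod p) * ∏ m, (m : ZMod p) = ∑ m, (N*m/p : ZMod p) * ∏ k ∈ erase, (N*k%p : ZMod p)
  have hF : (∏ m ∈ Finset.Ico 1 p, ((m : ℕ) : ZMod p)) ≠ 0 := by
    rw [Finset.prod_ne_zero_iff]
    intro m hm
    rw [Finset.mem_Ico] at hm
    rw [Ne, ZMod.natCast_eq_zero_iff]
    intro h
    have := Nat.le_of_dvd (by omega) h
    omega
  have hrm : ∀ m : ℕ, ((N * m % p : ℕ) : ZMod p) = (N : ZMod p) * (m : ZMod p) := by
    intro m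
    rw [ZMod.natCast_mod]
    push_cast
    ring
  have herase : ∀ m ∈ Finset.Ico 1 p,
      ∏ k ∈ (Finset.Ico 1 p).erase m, ((N * k % p : ℕ) : ZMod p)
      = ((N : ZMod p) * (m : ZMod p))⁻¹ * ∏ k ∈ Finset.Ico 1 p, ((k : ℕ) : ZMod p) := by
    intro m hm
    have hfull : ((N * m % p : ℕ) : ZMod p)
        * ∏ k ∈ (Finset.Ico 1 p).erase m, ((N * k % p : ℕ) : ZMod p)
        = ∏ k ∈ Finset.Ico 1 p, ((k : ℕ) : ZMod p) := by
      rw [Finset.mul_prod_erase (Finset.Ico 1 p) (fun k => ((N * k % p : ℕ) : ZMod p)) hm]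
      exact prod_mod_bij N p hp hpN (fun a => ((a : ℕ) : ZMod p))
    have hm0 : (m : ZMod p) ≠ 0 := by
      rw [Finset.mem_Ico] at hm
      rw [Ne, ZMod.natCast_eq_zero_iff]
      intro h
      have := Nat.le_of_dvd (by omega) h
      omega
    have hne : ((N : ZMod p) * (m : ZMod p)) ≠ 0 := mul_ne_zero hN0 hm0
    rw [hrm m] at hfull
    rw [← hfull, ← mul_assoc, inv_mul_cancel₀ hne, one_mul]
  have hq2 : (q : ZMod p)
      = ∑ m ∈ Finset.Ico 1 p, ((N * m / p : ℕ) : ZMod p)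
          * ((N : ZMod p) * (m : ZMod p))⁻¹ := by
    apply mul_right_cancel₀ hF
    rw [hcast, Finset.sum_mul]
    refine Finset.sum_congr rfl fun m hm => ?_
    rw [herase m hm]
    ring
  rw [hq2, Finset.mul_sum]
  refine Finset.sum_congr rfl fun m hm => ?_
  rw [mul_inv]
  have hh : (N : ZMod p) * (((N * m / p : ℕ) : ZMod p) * ((N : ZMod p)⁻¹ * (m : ZMod p)⁻¹))
      = ((N * m / p : ℕ) : ZMod p) * (m : ZMod p)⁻¹ * ((N : ZMod p) * (N : ZMod p)⁻¹) := by
    ring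
  rw [hh, mul_inv_cancel₀ hN0, mul_one]

/-- **Theorem 4.2 (Lerch).** For `N ≥ 2` and an odd prime `p` not dividing `N`,
`N·q_p(N) ≡ Σ_{j=1}^{N-1} j·s_p(j,N) (mod p)`, where `q_p(N) = (N^{p-1}-1)/p` is the Fermat
quotient with base `N` and `s_p(j,N) = Σ_{jp/N < m < (j+1)p/N} 1/m`. -/
theorem lerch (N p : ℕ) (hN : 2 ≤ N) (hp : p.Prime) (hodd : Odd p) (hpN : ¬ p ∣ N) :
    (N : ZMod p) * (((N ^ (p - 1) - 1) / p : ℕ) : ZMod p)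
    = ∑ j ∈ Finset.Ico 1 N, (j : ZMod p) *
        ∑ m ∈ (Finset.Ioo 0 p).filter
          (fun m : ℕ => j * p < N * m ∧ N * m < (j + 1) * p),
        ((m : ZMod p))⁻¹ := by
  haveI : Fact p.Prime := ⟨hp⟩
  have hp1 : 1 < p := hp.one_lt
  rw [lerch_key N p hN hp hpN]
  -- reindex
  have hIoo : Finset.Ioo 0 p = Finset.Ico 1 p := by
    ext x; simp only [Finset.mem_Ioo, Finset.mem_Ico]; omega
  simp only [hIoo]
  have cond_iff : ∀ m ∈ Finset.Ico 1 p, ∀ j : ℕ,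
      (j * p < N * m ∧ N * m < (j + 1) * p) ↔ j = N * m / p := by
    intro m hm j
    have hnd := pndvd N p m hp hpN hm
    constructor
    · rintro ⟨h1, h2⟩
      exact (Nat.div_eq_of_lt_le h1.le h2).symm
    · rintro rfl
      constructor
      · exact lt_of_le_of_ne (Nat.div_mul_le_self _ _)
          (fun h => hnd (Dvd.intro_left _ h))
      · exact (Nat.div_lt_iff_lt_mul (by omega)).mp (Nat.lt_succ_self _)
  calc ∑ m ∈ Finset.Ico 1 p, ((N * m / p : ℕ) : ZMod p) * ((m : ZMod p))⁻¹
      = ∑ m ∈ Finset.Ico 1 p, ∑ j ∈ Finset.Ico 1 N,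
          (if j * p < N * m ∧ N * m < (j + 1) * p then (j : ZMod p) * ((m : ZMod p))⁻¹ else 0) := by
        refine Finset.sum_congr rfl fun m hm => ?_
        have hiff := cond_iff m hm
        have : ∀ j ∈ Finset.Ico 1 N,
            (if j * p < N * m ∧ N * m < (j + 1) * p then (j : ZMod p) * ((m : ZMod p))⁻¹ else 0)
            = (if j = N * m / p then (j : ZMod p) * ((m : ZMod p))⁻¹ else 0) := by
          intro j _; simp only [hiff j]
        rw [Finset.sum_congr rfl this, Finset.sum_ite_eq' (Finset.Ico 1 N) (N * m / p)
          (fun j => (j : ZMod p) * ((m : ZMod p))⁻¹)]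
        by_cases hmem : N * m / p ∈ Finset.Ico 1 N
        · rw [if_pos hmem]
        · rw [if_neg hmem]
          have hm' := Finset.mem_Ico.mp hm
          have hlt : N * m / p < N := Nat.div_lt_of_lt_mul (by nlinarith [hm'.2])
          have h0 : N * m / p = 0 := by
            rcases Nat.eq_zero_or_pos (N * m / p) with h | h
            · exact h
            · exact absurd (Finset.mem_Ico.mpr ⟨h, hlt⟩) hmem
          rw [h0]; simp
    _ = ∑ j ∈ Finset.Ico 1 N, (j : ZMod p) *
          ∑ m ∈ (Finset.Ico 1 p).filter
            (fun m : ℕ => j * p < N * m ∧ N * m < (j + 1) * p), ((m : ZMod p))⁻¹ := by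
        rw [Finset.sum_comm]
        refine Finset.sum_congr rfl fun j _ => ?_
        rw [Finset.mul_sum, Finset.sum_filter]
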